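/- Let k be a field of characteristic p > 0 and A a finite-dimensional symmetric k-algebra with symmetrising form ⟨·,·⟩. Then for every n ∈ ℕ the orthogonal space T_n(A)^⊥ is contained in Z(A) and is an ideal of the commutative ring Z(A): for every z ∈ Z(A) and every w ∈ T_n(A)^⊥ one has z·w ∈ T_n(A)^⊥. -/

import Mathlib

/-- `KA`: the `k`-linear span in `A` of all commutators `a*b - b*a`. -/
def commutatorSpan (k A : Type*) [Field k] [Ring A] [Algebra k A] : Submodule k A :=
  Submodule.span k {x : A | ∃ a b : A, x = a * b - b * a}

set_option linter.unusedSectionVars false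


section Aux
variable {k A : Type*} [Field k] [Ring A] [Algebra k A]

lemma mem_commutatorSpan (a b : A) : a * b - b * a ∈ commutatorSpan k A :=
  Submodule.subset_span ⟨a, b, rfl⟩

lemma prod_rotate_sub_mem (l : List A) :
    l.prod - (l.rotate 1).prod ∈ commutatorSpan k A := by
  cases l with
  | nil => simp
  | cons a t =>
    have h : (a :: t).rotate 1 = t ++ [a] := by
      simpa using List.rotate_cons_succ t a 0
    rw [h, List.prod_cons, List.prod_append, List.prod_cons, List.prod_nil, mul_one]
    exact mem_commutatorSpan a t.prod

/-- cyclic rotation of a word -/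
def wrot {q : ℕ} [NeZero q] (f : Fin q → Bool) : Fin q → Bool := fun i => f (i + 1)

/-- the product in `A` associated to a word -/
def wprod (x y : A) {q : ℕ} (f : Fin q → Bool) : A :=
  (List.ofFn fun i => cond (f i) x y).prod

lemma ofFn_wrot {q : ℕ} [NeZero q] (g : Bool → A) (f : Fin q → Bool) :
    (List.ofFn fun i => g (wrot f i)) = (List.ofFn fun i => g (f i)).rotate 1 := by
  apply List.ext_getElem
  · simp
  intro i h1 h2
  simp only [List.getElem_ofFn, List.getElem_rotate, List.length_ofFn]
  congr 1
  show f (⟨i, by simpa using h1⟩ + 1) = _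
  congr 1
  apply Fin.ext
  simp [Fin.add_def, Fin.val_one', Nat.mod_add_mod, Nat.add_mod_mod]

lemma wprod_wrot_sub_mem (x y : A) {q : ℕ} [NeZero q] (f : Fin q → Bool) :
    wprod x y (wrot f) - wprod x y f ∈ commutatorSpan k A := by
  unfold wprod
  rw [ofFn_wrot (fun b => cond b x y) f]
  have := Submodule.neg_mem _ (prod_rotate_sub_mem (k := k) (List.ofFn fun i => cond (f i) x y))
  simpa using this

lemma wprod_wrot_iter_sub_mem (x y : A) {q : ℕ} [NeZero q] (t : ℕ) (f : Fin q → Bool) :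
    wprod x y (wrot^[t] f) - wprod x y f ∈ commutatorSpan k A := by
  induction t with
  | zero => simp
  | succ t ih =>
    rw [Function.iterate_succ_apply']
    have h2 := wprod_wrot_sub_mem (k := k) x y (wrot^[t] f)
    have := Submodule.add_mem _ h2 ih
    convert this using 1
    abel

open Fin.NatCast in
lemma wrot_iter_q {q : ℕ} [NeZero q] (f : Fin q → Bool) : wrot^[q] f = f := by
  have key : ∀ (t : ℕ) (f : Fin q → Bool) (i : Fin q), wrot^[t] f i = f (i + (t : Fin q)) := by
    intro t
    induction t with
    | zero => intro f i; simp
    | succ t ih =>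
      intro f i
      rw [Function.iterate_succ_apply]
      rw [ih (wrot f) i]
      show f (i + (t : Fin q) + 1) = _
      congr 1
      push_cast
      rw [add_assoc]
  funext i
  rw [key q f i, Fin.natCast_self, add_zero]

lemma wrot_injective {q : ℕ} [NeZero q] : Function.Injective (wrot (q := q)) := by
  intro u v h
  have hq : 0 < q := Nat.pos_of_ne_zero (NeZero.ne q)
  have : wrot^[q - 1 + 1] u = wrot^[q - 1 + 1] v := by
    rw [Function.iterate_succ_apply, Function.iterate_succ_apply, h]
  rwa [Nat.sub_add_cancel hq, wrot_iter_q, wrot_iter_q] at this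

lemma wrot_iter_injective {q : ℕ} [NeZero q] (t : ℕ) :
    Function.Injective (wrot (q := q))^[t] :=
  Function.Injective.iterate wrot_injective t

open Fin.NatCast in
lemma wrot_eq_self_iff {q : ℕ} [NeZero q] (f : Fin q → Bool) :
    wrot f = f ↔ (f = fun _ => true) ∨ (f = fun _ => false) := by
  constructor
  · intro h
    have hconst : ∀ t : ℕ, f (t : Fin q) = f 0 := by
      intro t
      induction t with
      | zero => simp
      | succ t ih =>
        have := congrFun h (t : Fin q)
        unfold wrot at this
        rw [← ih, ← this]
        congr 1
        push_cast
        ring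
    cases hb : f 0 with
    | true =>
      left; funext i
      rw [← Fin.cast_val_eq_self i, hconst i.val, hb]
    | false =>
      right; funext i
      rw [← Fin.cast_val_eq_self i, hconst i.val, hb]
  · rintro (rfl | rfl) <;> rfl

lemma wprod_cons (x y : A) {q : ℕ} (b : Bool) (f : Fin q → Bool) :
    wprod x y (Fin.cons b f) = cond b x y * wprod x y f := by
  unfold wprod
  rw [List.ofFn_succ]
  simp [Fin.cons_zero, Fin.cons_succ]

lemma add_pow_eq_sum_wprod (x y : A) (q : ℕ) :
    (x + y) ^ q = ∑ f : Fin q → Bool, wprod x y f := by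
  induction q with
  | zero => simp [wprod]
  | succ q ih =>
    have he : (∑ g : Fin (q+1) → Bool, wprod x y g)
        = ∑ bf : Bool × (Fin q → Bool), wprod x y (Fin.cons bf.1 bf.2) :=
      (Fintype.sum_equiv (Fin.consEquiv fun _ => Bool) _ _ (fun _ => rfl)).symm
    rw [pow_succ', ih, he, Fintype.sum_prod_type, Fintype.sum_bool]
    simp only [wprod_cons, cond_true, cond_false]
    rw [← Finset.mul_sum, ← Finset.mul_sum, add_mul]

lemma wrot_iter_mul {q : ℕ} [NeZero q] {d : ℕ} {f : Fin q → Bool} (hd : wrot^[d] f = f)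
    (s : ℕ) : wrot^[d * s] f = f := by
  induction s with
  | zero => simp
  | succ s ih =>
    rw [Nat.mul_succ, Function.iterate_add_apply, hd, ih]

lemma wrot_iter_mod {q : ℕ} [NeZero q] {d : ℕ} {f : Fin q → Bool} (hd : wrot^[d] f = f)
    (m : ℕ) : wrot^[m] f = wrot^[m % d] f := by
  conv_lhs => rw [← Nat.mod_add_div m d]
  rw [Function.iterate_add_apply, wrot_iter_mul hd]

lemma sum_nonfixed_mem (x y : A) {q : ℕ} [NeZero q]
    (hdvd : ∀ d : ℕ, d ∣ q → d ≠ 1 → ∀ a : A, d • a = 0)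
    (S : Finset (Fin q → Bool)) :
    (∀ f ∈ S, wrot f ∈ S) → (∀ f ∈ S, wrot f ≠ f) →
      ∑ f ∈ S, wprod x y f ∈ commutatorSpan k A := by
  classical
  induction S using Finset.strongInduction with
  | _ S ih =>
    intro hcl hnc
    rcases S.eq_empty_or_nonempty with rfl | ⟨f, hf⟩
    · simp
    · have hq : 0 < q := Nat.pos_of_ne_zero (NeZero.ne q)
      have hex : ∃ t, 0 < t ∧ wrot^[t] f = f := ⟨q, hq, wrot_iter_q f⟩
      set d := Nat.find hex with hdd
      obtain ⟨hdpos, hdfix⟩ := Nat.find_spec hex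
      rw [← hdd] at hdpos hdfix
      have hmin : ∀ t, t < d → ¬(0 < t ∧ wrot^[t] f = f) := fun t ht => Nat.find_min hex ht
      have hdq : d ∣ q := by
        have h1 : wrot^[q % d] f = f := by
          rw [← wrot_iter_mod hdfix q, wrot_iter_q]
        rcases Nat.eq_zero_or_pos (q % d) with h0 | hpos
        · exact Nat.dvd_of_mod_eq_zero h0
        · exact absurd ⟨hpos, h1⟩ (hmin _ (Nat.mod_lt q hdpos))
      have hd1 : d ≠ 1 := by
        intro h
        apply hnc f hf
        simpa [h] using hdfix
      set O := (Finset.range d).image (fun t => wrot^[t] f) with hO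
      have key : ∀ a b : ℕ, a < b → b < d → wrot^[a] f = wrot^[b] f → False := by
        intro a b hab hbd he
        have h2 : wrot^[a] (wrot^[b - a] f) = wrot^[a] f := by
          rw [← Function.iterate_add_apply]
          have hba : a + (b - a) = b := by omega
          rw [hba, ← he]
        have h3 : wrot^[b - a] f = f := wrot_iter_injective a h2
        exact hmin (b - a) (by omega) ⟨by omega, h3⟩
      have hinj : ∀ a ∈ Finset.range d, ∀ b ∈ Finset.range d,
          wrot^[a] f = wrot^[b] f → a = b := by
        intro a ha b hb hab
        rcases lt_trichotomy a b with h | h | h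
        · exact absurd hab (fun he => key a b h (Finset.mem_range.1 hb) he)
        · exact h
        · exact absurd hab.symm (fun he => key b a h (Finset.mem_range.1 ha) he)
      have hiter_mem : ∀ t, wrot^[t] f ∈ S := by
        intro t; induction t with
        | zero => simpa
        | succ t ih2 => rw [Function.iterate_succ_apply']; exact hcl _ ih2
      have hOsub : O ⊆ S := by
        intro g hg
        simp only [hO, Finset.mem_image, Finset.mem_range] at hg
        obtain ⟨t, _, rfl⟩ := hg
        exact hiter_mem t
      have hsum : ∑ g ∈ O, wprod x y g = ∑ t ∈ Finset.range d, wprod x y (wrot^[t] f) :=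
        Finset.sum_image hinj
      have hOmem : (∑ g ∈ O, wprod x y g) ∈ commutatorSpan k A := by
        rw [hsum]
        have h1 : (∑ t ∈ Finset.range d, (wprod x y (wrot^[t] f) - wprod x y f))
            ∈ commutatorSpan k A :=
          Submodule.sum_mem _ fun t _ => wprod_wrot_iter_sub_mem x y t f
        have h2 : ∑ t ∈ Finset.range d, (wprod x y (wrot^[t] f) - wprod x y f)
            = ∑ t ∈ Finset.range d, wprod x y (wrot^[t] f) - d • wprod x y f := by
          rw [Finset.sum_sub_distrib, Finset.sum_const, Finset.card_range]
        rw [h2, hdvd d hdq hd1, sub_zero] at h1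
        exact h1
      have hfO : f ∈ O := Finset.mem_image.2 ⟨0, Finset.mem_range.2 hdpos, rfl⟩
      have hOcl : ∀ g, wrot g ∈ O → g ∈ O := by
        intro g hg
        simp only [hO, Finset.mem_image, Finset.mem_range] at hg ⊢
        obtain ⟨t, htd, hgt⟩ := hg
        refine ⟨(q - 1 + t) % d, Nat.mod_lt _ hdpos, ?_⟩
        rw [← wrot_iter_mod hdfix, Function.iterate_add_apply, hgt,
          ← Function.iterate_succ_apply, Nat.succ_eq_add_one, Nat.sub_add_cancel hq, wrot_iter_q]
      have hssub : S \ O ⊂ S := Finset.sdiff_ssubset hOsub ⟨f, hfO⟩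
      have hrec : (∑ g ∈ S \ O, wprod x y g) ∈ commutatorSpan k A := by
        apply ih (S \ O) hssub
        · intro g hg
          rw [Finset.mem_sdiff] at hg ⊢
          exact ⟨hcl g hg.1, fun h => hg.2 (hOcl g h)⟩
        · intro g hg
          exact hnc g (Finset.mem_sdiff.1 hg).1
      have hsplit := Finset.sum_sdiff (f := fun g => wprod x y g) hOsub
      rw [← hsplit]
      exact Submodule.add_mem _ hrec hOmem

lemma add_pow_sub_mem (p : ℕ) [Fact p.Prime] [CharP k p] (n : ℕ) (x y : A) :
    (x + y) ^ p ^ n - x ^ p ^ n - y ^ p ^ n ∈ commutatorSpan k A := by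
  rcases Nat.eq_zero_or_pos n with rfl | hn
  · simp
  · have hp := (Fact.out : p.Prime)
    set q := p ^ n with hq
    have hq0 : q ≠ 0 := pow_ne_zero _ hp.pos.ne'
    haveI : NeZero q := ⟨hq0⟩
    classical
    have hdvd : ∀ d : ℕ, d ∣ q → d ≠ 1 → ∀ a : A, d • a = 0 := by
      intro d hd hd1 a
      obtain ⟨m, hm, rfl⟩ := (Nat.dvd_prime_pow hp).1 hd
      have hm0 : m ≠ 0 := by rintro rfl; simp at hd1
      have hpd : p ∣ p ^ m := dvd_pow_self p hm0
      have hcast : ((p ^ m : ℕ) : k) = 0 := (CharP.cast_eq_zero_iff k p _).2 hpd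
      rw [← Nat.cast_smul_eq_nsmul k, hcast, zero_smul]
    have hexp := add_pow_eq_sum_wprod x y q
    have hT : wprod x y (fun _ : Fin q => true) = x ^ q := by
      simp [wprod, List.prod_replicate]
    have hF : wprod x y (fun _ : Fin q => false) = y ^ q := by
      simp [wprod, List.prod_replicate]
    have hne : (fun _ : Fin q => true) ≠ (fun _ : Fin q => false) := by
      intro h
      exact Bool.noConfusion (congrFun h 0)
    have hfilter_eq : Finset.univ.filter (fun f : Fin q → Bool => wrot f = f)
        = {fun _ => true, fun _ => false} := by
      ext g
      simp only [Finset.mem_filter, Finset.mem_univ, true_and, Finset.mem_insert,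
        Finset.mem_singleton]
      exact wrot_eq_self_iff g
    have hmem : (∑ f ∈ Finset.univ.filter (fun f : Fin q → Bool => ¬ wrot f = f),
        wprod x y f) ∈ commutatorSpan k A := by
      apply sum_nonfixed_mem x y hdvd
      · intro f hfm
        simp only [Finset.mem_filter, Finset.mem_univ, true_and] at hfm ⊢
        intro h
        exact hfm (wrot_injective h)
      · intro f hfm
        exact (Finset.mem_filter.1 hfm).2
    rw [hexp, ← Finset.sum_filter_add_sum_filter_not Finset.univ
      (fun f : Fin q → Bool => wrot f = f) (wprod x y), hfilter_eq,
      Finset.sum_pair hne, hT, hF]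
    convert hmem using 1
    abel

lemma pow_mul_shift (a b : A) (m : ℕ) : (a * b) ^ (m + 1) = a * ((b * a) ^ m * b) := by
  induction m with
  | zero => simp
  | succ m ih =>
    rw [pow_succ, ih, pow_succ]
    simp only [mul_assoc]

lemma commutator_pow_mem (p : ℕ) [Fact p.Prime] [CharP k p] (n : ℕ) (a b : A) :
    (a * b - b * a) ^ p ^ n ∈ commutatorSpan k A := by
  rcases Nat.eq_zero_or_pos n with rfl | hn
  · simpa using mem_commutatorSpan a b
  · have hp := (Fact.out : p.Prime)
    set q := p ^ n with hq
    have hq0 : 0 < q := pow_pos hp.pos n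
    have h1 : (a * b + -(b * a)) ^ q - (a * b) ^ q - (-(b * a)) ^ q ∈ commutatorSpan k A :=
      add_pow_sub_mem p n (a * b) (-(b * a))
    have hm1 : ((-1 : A)) ^ q = -1 := by
      rcases hp.eq_two_or_odd' with h2 | hodd
      · have h2A : (1 : A) + 1 = 0 := by
          have hk : ((2 : ℕ) : k) = 0 := by
            rw [← h2]; exact CharP.cast_eq_zero k p
          have : ((2 : ℕ) : A) = algebraMap k A ((2 : ℕ) : k) := by
            rw [map_natCast]
          rw [hk, map_zero] at this
          simpa [Nat.cast_ofNat, one_add_one_eq_two] using this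
        have hneg : (-1 : A) = 1 := by
          have := neg_eq_of_add_eq_zero_left h2A
          simpa using this
        rw [hneg, one_pow]
      · exact Odd.neg_one_pow (hodd.pow)
    have hneg_pow : (-(b * a) : A) ^ q = -((b * a) ^ q) := by
      rw [neg_pow, hm1, neg_one_mul]
    rw [hneg_pow] at h1
    have habq : (a * b) ^ q = a * ((b * a) ^ (q - 1) * b) := by
      have := pow_mul_shift a b (q - 1)
      rwa [Nat.sub_add_cancel hq0] at this
    have hbaq : (b * a) ^ q = ((b * a) ^ (q - 1) * b) * a := by
      conv_lhs => rw [show q = (q - 1) + 1 by omega, pow_succ]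
      rw [mul_assoc, ← mul_assoc]
    have h2 : (a * b) ^ q - (b * a) ^ q ∈ commutatorSpan k A := by
      rw [habq, hbaq]
      exact mem_commutatorSpan a ((b * a) ^ (q - 1) * b)
    have hsum := Submodule.add_mem _ h1 h2
    convert hsum using 1
    rw [sub_eq_add_neg]
    abel

lemma mul_central_mem {z : A} (hz : ∀ b : A, b * z = z * b) {u : A}
    (hu : u ∈ commutatorSpan k A) : u * z ∈ commutatorSpan k A := by
  induction hu using Submodule.span_induction with
  | mem w hw =>
    obtain ⟨a, b, rfl⟩ := hw
    have heq : (a * b - b * a) * z = a * (b * z) - (b * z) * a := by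
      rw [sub_mul, mul_assoc]
      congr 1
      rw [mul_assoc, hz a, ← mul_assoc]
    rw [heq]
    exact mem_commutatorSpan a (b * z)
  | zero => simp
  | add u v _ _ hu' hv' => rw [add_mul]; exact Submodule.add_mem _ hu' hv'
  | smul r u _ hu' => rw [smul_mul_assoc]; exact Submodule.smul_mem _ _ hu'

end Aux

/-- For a finite-dimensional symmetric `k`-algebra `A` over a field of characteristic
`p > 0` and any `n`, the orthogonal space `T_n(A)^⊥` (with respect to the symmetrising
form) is contained in the centre `Z(A)` and is an ideal of `Z(A)`. -/
theorem Tn_perp_is_ideal_of_center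
    (k A : Type*) [Field k] [Ring A] [Algebra k A] [FiniteDimensional k A]
    (p : ℕ) [Fact p.Prime] [CharP k p]
    (B : A →ₗ[k] A →ₗ[k] k)
    (hsymm : ∀ a b : A, B a b = B b a)
    (hassoc : ∀ a b c : A, B (a * b) c = B a (b * c))
    (hnondeg : ∀ a : A, (∀ b : A, B a b = 0) → a = 0)
    (n : ℕ) :
    ({a : A | ∀ x : A, x ^ p ^ n ∈ commutatorSpan k A → B a x = 0} ⊆
        (Subalgebra.center k A : Set A)) ∧
    (∀ z ∈ Subalgebra.center k A,
      ∀ w ∈ {a : A | ∀ x : A, x ^ p ^ n ∈ commutatorSpan k A → B a x = 0},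
        z * w ∈ {a : A | ∀ x : A, x ^ p ^ n ∈ commutatorSpan k A → B a x = 0}) := by
  constructor
  · intro w hw
    simp only [Set.mem_setOf_eq] at hw
    rw [SetLike.mem_coe, Subalgebra.mem_center_iff]
    intro a
    have key : w * a - a * w = 0 := by
      apply hnondeg
      intro b
      have h1 : B (w * a - a * w) b = B w (a * b - b * a) := by
        rw [map_sub, LinearMap.sub_apply, hassoc w a b, hassoc a w b, hsymm a (w * b),
          hassoc w b a, ← map_sub]
      rw [h1]
      exact hw _ (commutator_pow_mem p n a b)
    exact (sub_eq_zero.1 key).symm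
  · intro z hz w hw
    simp only [Set.mem_setOf_eq] at hw ⊢
    intro x hx
    have hzc : ∀ b : A, b * z = z * b := Subalgebra.mem_center_iff.1 hz
    have h1 : B (z * w) x = B w (x * z) := by
      rw [hassoc z w x, hsymm z (w * x), hassoc w x z]
    rw [h1]
    apply hw
    have hc : Commute x z := hzc x
    rw [hc.mul_pow]
    have hzq : ∀ b : A, b * z ^ p ^ n = z ^ p ^ n * b :=
      Subalgebra.mem_center_iff.1 (pow_mem hz (p ^ n))
    exact mul_central_mem hzq hx
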